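/- arXiv:1702.02998 — 5 statements merged into one kernel-verified Lean document; each statement's English description precedes it below -/
import Mathlib

section
/- Let α, α', β, β' be words over the positive integers with |α| = |α'| and |β| = |β'|, and let k be a letter strictly greater than every letter of α, α', β, β', such that αkβ and α'kβ' are standard words. If the decreasing trees of αβ and α'β' have the same shape, then the decreasing trees of αkβ and α'kβ' have the same shape. -/
/-- Binary trees labelled by elements of `α`. -/
inductive BT (α : Type) : Type
  | leaf : BT α
  | node : BT α → α → BT α → BT α
  deriving DecidableEq

namespace BT

variable {α β : Type}

/-- Map a function over the labels of a tree. -/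
def map (f : α → β) : BT α → BT β
  | leaf => leaf
  | node l a r => node (map f l) (f a) (map f r)

/-- The shape of a labelled tree: its underlying unlabelled tree. -/
def shape : BT α → BT Unit := map (fun _ => ())

/-- The content of a tree: the multiset of its labels. -/
def content : BT α → Multiset α
  | leaf => 0
  | node l a r => a ::ₘ (content l + content r)

/-- Infix (in-order) reading of a labelled tree. -/
def infixRead : BT α → List α
  | leaf => []
  | node l a r => infixRead l ++ a :: infixRead r

/-- Left-to-right postfix (post-order) reading of a labelled tree. -/
def postfixRead : BT α → List α
  | leaf => []
  | node l a r => postfixRead l ++ postfixRead r ++ [a]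

/-- Right strict binary search tree: each label is ≥ everything in its left
subtree and < everything in its right subtree. -/
def IsRBST : BT ℕ+ → Prop
  | leaf => True
  | node l a r =>
      (∀ x ∈ content l, x ≤ a) ∧ (∀ x ∈ content r, a < x) ∧ IsRBST l ∧ IsRBST r

/-- Left strict binary search tree: each label is > everything in its left
subtree and ≤ everything in its right subtree. -/
def IsLBST : BT ℕ+ → Prop
  | leaf => True
  | node l a r =>
      (∀ x ∈ content l, x < a) ∧ (∀ x ∈ content r, a ≤ x) ∧ IsLBST l ∧ IsLBST r

/-- Right strict leaf insertion: `a ≤` root label goes left, else right. -/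
def rIns (a : ℕ+) : BT ℕ+ → BT ℕ+
  | leaf => node leaf a leaf
  | node l x r => if a ≤ x then node (rIns a l) x r else node l x (rIns a r)

/-- Left strict leaf insertion: `a ≥` root label goes right, else left. -/
def lIns (a : ℕ+) : BT ℕ+ → BT ℕ+
  | leaf => node leaf a leaf
  | node l x r => if x ≤ a then node l x (lIns a r) else node (lIns a l) x r

end BT

open BT

/-- The sylvester P-symbol: insert the letters of `u` from right to left via
right strict leaf insertion. -/
def Psylv (u : List ℕ+) : BT ℕ+ := u.foldr rIns .leaf

/-- Left strict insertion of a word, processing letters left to right. -/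
def Pltree (u : List ℕ+) : BT ℕ+ := u.foldl (fun t a => lIns a t) .leaf

/-- Auxiliary fuelled construction of the decreasing tree of a word:
the maximum letter is the root, and the subtrees are built recursively from
the factors to its left and right. -/
def decAux : ℕ → List ℕ+ → BT ℕ+
  | 0, _ => .leaf
  | _ + 1, [] => .leaf
  | n + 1, (a :: l) =>
      let m := (a :: l).foldr max a
      let i := (a :: l).idxOf m
      .node (decAux n ((a :: l).take i)) m (decAux n ((a :: l).drop (i + 1)))

/-- The decreasing tree of a word (with distinct letters). -/
def decTree (u : List ℕ+) : BT ℕ+ := decAux u.length u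

/-- Auxiliary fuelled construction of the increasing tree of a word. -/
def incAux : ℕ → List ℕ+ → BT ℕ+
  | 0, _ => .leaf
  | _ + 1, [] => .leaf
  | n + 1, (a :: l) =>
      let m := (a :: l).foldr min a
      let i := (a :: l).idxOf m
      .node (incAux n ((a :: l).take i)) m (incAux n ((a :: l).drop (i + 1)))

/-- The increasing tree of a word (with distinct letters). -/
def incTree (u : List ℕ+) : BT ℕ+ := incAux u.length u

/-- The standardization of a word: the `j`-th letter `a` is relabelled by the
number of letters smaller than `a` plus the number of occurrences of `a` up to
and including position `j`. -/
def stdWord (u : List ℕ+) : List ℕ+ :=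
  u.mapIdx (fun j a =>
    (u.countP (fun b => decide (b < a)) +
       (u.take (j + 1)).countP (fun b => decide (b = a))).toPNat')

/-- The inverse of a standard word, viewed as a permutation in one-line
notation: the `j`-th letter is the position of `j` in `w`. -/
def invWord (w : List ℕ+) : List ℕ+ :=
  (List.range w.length).map (fun j => (w.idxOf (j + 1).toPNat' + 1).toPNat')

/-- A standard word: a permutation of `1, …, k` in one-line notation. -/
def IsStandard (w : List ℕ+) : Prop :=
  w.Perm ((List.range w.length).map (fun j => (j + 1).toPNat'))

/-- The quasi-Kashiwara raising operator `ė i` is defined on `u`: `u` has no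
letter `i+1` to the left of a letter `i`, and `u` contains a letter `i+1`. -/
def qeDef (i : ℕ+) (u : List ℕ+) : Prop :=
  ¬ List.Sublist [i + 1, i] u ∧ (i + 1) ∈ u

/-- The quasi-Kashiwara lowering operator `ḟ i` is defined on `u`: `u` has no
letter `i+1` to the left of a letter `i`, and `u` contains a letter `i`. -/
def qfDef (i : ℕ+) (u : List ℕ+) : Prop :=
  ¬ List.Sublist [i + 1, i] u ∧ i ∈ u

/-- The action of `ė i`: replace the leftmost letter `i+1` by `i`. -/
def qe (i : ℕ+) (u : List ℕ+) : List ℕ+ := u.set (u.idxOf (i + 1)) i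

/-- The action of `ḟ i`: replace the rightmost letter `i` by `i+1`. -/
def qf (i : ℕ+) (u : List ℕ+) : List ℕ+ :=
  (u.reverse.set (u.reverse.idxOf i) (i + 1)).reverse


namespace DecTreeProof

open List

lemma foldr_max_le (l : List ℕ+) (a m : ℕ+) (ha : a ≤ m) (h : ∀ x ∈ l, x ≤ m) :
    l.foldr max a ≤ m := by
  induction l with
  | nil => exact ha
  | cons c t ih =>
    simp only [List.foldr_cons]
    exact max_le (h c (by simp)) (ih fun x hx => h x (by simp [hx]))

lemma mem_le_foldr_max (l : List ℕ+) (a : ℕ+) : ∀ x ∈ l, x ≤ l.foldr max a := by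
  induction l with
  | nil => simp
  | cons c t ih =>
    intro x hx
    rcases List.mem_cons.mp hx with h | h
    · subst h; exact le_max_left _ _
    · exact (ih x h).trans (le_max_right _ _)

lemma foldr_max_mem (l : List ℕ+) (a : ℕ+) : l.foldr max a = a ∨ l.foldr max a ∈ l := by
  induction l with
  | nil => left; rfl
  | cons c t ih =>
    simp only [List.foldr_cons]
    rcases max_choice c (t.foldr max a) with h | h
    · right; simp [h]
    · rcases ih with h' | h'
      · left; rw [h, h']
      · right; rw [h]; exact List.mem_cons_of_mem _ h'

lemma head_foldr_max_mem (a : ℕ+) (l : List ℕ+) : (a::l).foldr max a ∈ a :: l := by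
  rcases foldr_max_mem (a::l) a with h | h
  · rw [h]; simp
  · exact h

lemma foldr_max_eq (a m : ℕ+) (l : List ℕ+) (hm : m ∈ a :: l)
    (hub : ∀ x ∈ a :: l, x ≤ m) : (a :: l).foldr max a = m :=
  le_antisymm (foldr_max_le _ _ _ (hub a (by simp)) hub)
    (mem_le_foldr_max _ _ _ hm)

lemma decAux_eq : ∀ (n : ℕ) (u : List ℕ+), u.length ≤ n → decAux n u = decAux u.length u := by
  intro n
  induction n using Nat.strong_induction_on with
  | _ n ih =>
    intro u hu
    rcases n with _ | n
    · rw [show u.length = 0 from Nat.le_zero.mp hu]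
    · rcases u with _ | ⟨a, l⟩
      · simp [decAux]
      · have hl : l.length ≤ n := Nat.succ_le_succ_iff.mp hu
        have hmem : (a::l).foldr max a ∈ a :: l := head_foldr_max_mem a l
        have hi : (a::l).idxOf ((a::l).foldr max a) < (a::l).length :=
          List.idxOf_lt_length_iff.mpr hmem
        simp only [List.length_cons] at hi ⊢
        simp only [decAux]
        have hlt : ((a::l).take ((a::l).idxOf ((a::l).foldr max a))).length ≤ l.length := by
          simp only [List.length_take, List.length_cons]; omega
        have hld : ((a::l).drop ((a::l).idxOf ((a::l).foldr max a) + 1)).length ≤ l.length := by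
          simp only [List.length_drop, List.length_cons]; omega
        congr 1
        · rw [ih n (by omega) _ (hlt.trans hl), ih l.length (by omega) _ hlt]
        · rw [ih n (by omega) _ (hld.trans hl), ih l.length (by omega) _ hld]

lemma decTree_eq_node {m : ℕ+} {u : List ℕ+} (hm : m ∈ u) (hub : ∀ x ∈ u, x ≤ m) :
    decTree u = .node (decTree (u.take (u.idxOf m))) m (decTree (u.drop (u.idxOf m + 1))) := by
  rcases u with _ | ⟨a, l⟩
  · simp at hm
  · have hfold : (a::l).foldr max a = m := foldr_max_eq a m l hm hub
    have hi : (a::l).idxOf m < (a::l).length := List.idxOf_lt_length_iff.mpr hm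
    simp only [List.length_cons] at hi
    have hlt : ((a::l).take ((a::l).idxOf m)).length ≤ l.length := by
      simp only [List.length_take, List.length_cons]; omega
    have hld : ((a::l).drop ((a::l).idxOf m + 1)).length ≤ l.length := by
      simp only [List.length_drop, List.length_cons]; omega
    show decAux (a::l).length (a::l) = _
    simp only [List.length_cons, decAux, hfold]
    unfold decTree
    rw [decAux_eq l.length _ hlt, decAux_eq l.length _ hld]

lemma infixRead_decTree_aux : ∀ (N : ℕ) (u : List ℕ+), u.length ≤ N → (decTree u).infixRead = u := by
  intro N
  induction N with
  | zero =>
    intro u hu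
    rw [List.length_eq_zero_iff.mp (Nat.le_zero.mp hu)]
    rfl
  | succ N ih =>
    intro u hu
    rcases u with _ | ⟨a, l⟩
    · rfl
    · have hmem : (a::l).foldr max a ∈ a :: l := head_foldr_max_mem a l
      have hub := mem_le_foldr_max l a
      have hub' : ∀ x ∈ a :: l, x ≤ (a::l).foldr max a := mem_le_foldr_max (a::l) a
      rw [decTree_eq_node hmem hub']
      have hi : (a::l).idxOf ((a::l).foldr max a) < (a::l).length :=
        List.idxOf_lt_length_iff.mpr hmem
      simp only [List.length_cons] at hu hi
      have h1 : ((a::l).take ((a::l).idxOf ((a::l).foldr max a))).length ≤ N := by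
        simp only [List.length_take, List.length_cons]; omega
      have h2 : ((a::l).drop ((a::l).idxOf ((a::l).foldr max a) + 1)).length ≤ N := by
        simp only [List.length_drop, List.length_cons]; omega
      simp only [infixRead, ih _ h1, ih _ h2]
      have hi' : (a::l).idxOf ((a::l).foldr max a) < (a::l).length := by
        simp only [List.length_cons]; omega
      have hg : (a::l)[(a::l).idxOf ((a::l).foldr max a)]'hi' = (a::l).foldr max a :=
        List.getElem_idxOf hi'
      have key : (a::l).take ((a::l).idxOf ((a::l).foldr max a)) ++
          (a::l)[(a::l).idxOf ((a::l).foldr max a)]'hi' ::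
          (a::l).drop ((a::l).idxOf ((a::l).foldr max a) + 1) = a :: l := by
        rw [List.getElem_cons_drop]
        exact List.take_append_drop _ _
      rw [hg] at key
      exact key

lemma infixRead_decTree (u : List ℕ+) : (decTree u).infixRead = u :=
  infixRead_decTree_aux u.length u le_rfl

lemma infixRead_map {α β : Type} (f : α → β) : ∀ t : BT α, (BT.map f t).infixRead = t.infixRead.map f := by
  intro t
  induction t with
  | leaf => rfl
  | node l a r ihl ihr => simp [BT.map, infixRead, ihl, ihr]

lemma length_infixRead_of_shape_eq {t t' : BT ℕ+} (h : shape t = shape t') :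
    t.infixRead.length = t'.infixRead.length := by
  have h2 : (BT.map (fun _ => ()) t).infixRead = (BT.map (fun _ => ()) t').infixRead :=
    congrArg BT.infixRead h
  rw [infixRead_map, infixRead_map] at h2
  simpa using congrArg List.length h2

lemma shape_eq_node_iff {l r l' r' : BT ℕ+} {a a' : ℕ+} :
    shape (.node l a r) = shape (.node l' a' r') ↔ shape l = shape l' ∧ shape r = shape r' := by
  have hn : ∀ (l r : BT ℕ+) (a : ℕ+), shape (.node l a r) = .node (shape l) () (shape r) :=
    fun _ _ _ => rfl
  rw [hn, hn]
  simp [BT.node.injEq]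

lemma key : ∀ (N : ℕ) (a b a' b' : List ℕ+), a.length + b.length ≤ N →
    a.length = a'.length → b.length = b'.length →
    shape (decTree (a ++ b)) = shape (decTree (a' ++ b')) →
    shape (decTree a) = shape (decTree a') ∧ shape (decTree b) = shape (decTree b') := by
  intro N
  induction N with
  | zero =>
    intro a b a' b' hN ha hb hs
    have h1 : a = [] := List.length_eq_zero_iff.mp (by omega)
    have h2 : b = [] := List.length_eq_zero_iff.mp (by omega)
    have h3 : a' = [] := List.length_eq_zero_iff.mp (by omega)
    have h4 : b' = [] := List.length_eq_zero_iff.mp (by omega)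
    subst h1; subst h2; subst h3; subst h4
    exact ⟨rfl, rfl⟩
  | succ N ih =>
    intro a b a' b' hN ha hb hs
    rcases a with _ | ⟨xa, ta⟩
    · have ha' : a' = [] := List.length_eq_zero_iff.mp ha.symm
      subst ha'
      exact ⟨rfl, hs⟩
    rcases b with _ | ⟨xb, tb⟩
    · have hb' : b' = [] := List.length_eq_zero_iff.mp hb.symm
      subst hb'
      rw [List.append_nil, List.append_nil] at hs
      exact ⟨hs, rfl⟩
    rcases a' with _ | ⟨xa', ta'⟩
    · simp at ha
    rcases b' with _ | ⟨xb', tb'⟩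
    · simp at hb
    -- abbreviations
    set a := xa :: ta with ha_def
    set b := xb :: tb with hb_def
    set a' := xa' :: ta' with ha'_def
    set b' := xb' :: tb' with hb'_def
    set u := a ++ b with hu_def
    set u' := a' ++ b' with hu'_def
    have hu_cons : u = xa :: (ta ++ b) := rfl
    have hu'_cons : u' = xa' :: (ta' ++ b') := rfl
    set m := u.foldr max xa with hm_def
    set m' := u'.foldr max xa' with hm'_def
    have hmem : m ∈ u := by rw [hu_cons] at hm_def ⊢; exact hm_def ▸ head_foldr_max_mem _ _
    have hmem' : m' ∈ u' := by rw [hu'_cons] at hm'_def ⊢; exact hm'_def ▸ head_foldr_max_mem _ _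
    have hub : ∀ x ∈ u, x ≤ m := by
      rw [hu_cons] at hm_def ⊢; exact hm_def ▸ mem_le_foldr_max _ _
    have hub' : ∀ x ∈ u', x ≤ m' := by
      rw [hu'_cons] at hm'_def ⊢; exact hm'_def ▸ mem_le_foldr_max _ _
    set i := u.idxOf m with hi_def
    set i' := u'.idxOf m' with hi'_def
    have hilt : i < u.length := List.idxOf_lt_length_iff.mpr hmem
    have hi'lt : i' < u'.length := List.idxOf_lt_length_iff.mpr hmem'
    rw [decTree_eq_node hmem hub, decTree_eq_node hmem' hub', ← hi_def, ← hi'_def,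
      shape_eq_node_iff] at hs
    have hulen : u.length = u'.length := by
      rw [hu_def, hu'_def, List.length_append, List.length_append, ha, hb]
    clear_value i i'
    have hii' : i = i' := by
      have e1 := length_infixRead_of_shape_eq hs.1
      rw [infixRead_decTree, infixRead_decTree] at e1
      simp only [List.length_take] at e1
      omega
    rw [← hii'] at hs hi'lt
    by_cases hcase : i < a.length
    · -- maximum falls inside a (and a')
      have hcase' : i < a'.length := ha ▸ hcase
      have ht : u.take i = a.take i := List.take_append_of_le_length hcase.le
      have ht' : u'.take i = a'.take i := List.take_append_of_le_length hcase'.le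
      have hd : u.drop (i+1) = a.drop (i+1) ++ b := List.drop_append_of_le_length hcase
      have hd' : u'.drop (i+1) = a'.drop (i+1) ++ b' := List.drop_append_of_le_length hcase'
      have hsum : (a.drop (i+1)).length + b.length ≤ N := by
        simp only [List.length_drop]
        have : 0 < a.length := by rw [ha_def]; simp
        omega
      obtain ⟨hR, hB⟩ := ih (a.drop (i+1)) b (a'.drop (i+1)) b' hsum
        (by simp only [List.length_drop, ha]) hb (by rw [← hd, ← hd']; exact hs.2)
      refine ⟨?_, hB⟩
      -- reconstruct a and a'
      have hgm : u[i]'hilt = m := by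
        simp only [hi_def]
        exact List.getElem_idxOf (List.idxOf_lt_length_iff.mpr hmem)
      have hma : m ∈ a := by
        have h3 : u[i]'hilt = a[i]'hcase := List.getElem_append_left (bs := b) hcase
        rw [← hgm, h3]
        exact List.getElem_mem _
      have hgm' : u'[i]'hi'lt = m' := by
        simp only [hii', hi'_def]
        exact List.getElem_idxOf (List.idxOf_lt_length_iff.mpr hmem')
      have hma' : m' ∈ a' := by
        have h3 : u'[i]'hi'lt = a'[i]'hcase' := List.getElem_append_left (bs := b') hcase'
        rw [← hgm', h3]
        exact List.getElem_mem _
      have huba : ∀ x ∈ a, x ≤ m := fun x hx => hub x (List.mem_append_left _ hx)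
      have huba' : ∀ x ∈ a', x ≤ m' := fun x hx => hub' x (List.mem_append_left _ hx)
      have hia : a.idxOf m = i := by
        rw [hi_def, hu_def, List.idxOf_append_of_mem hma]
      have hia' : a'.idxOf m' = i := by
        rw [hii', hi'_def, hu'_def, List.idxOf_append_of_mem hma']
      rw [decTree_eq_node hma huba, decTree_eq_node hma' huba', hia, hia',
        shape_eq_node_iff]
      exact ⟨by rw [← ht, ← ht']; exact hs.1, hR⟩
    · -- maximum falls inside b (and b')
      push_neg at hcase
      set j := i - a.length with hj_def
      have hij : i = a.length + j := by omega
      have hjb : j < b.length := by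
        rw [hu_def, List.length_append] at hilt; omega
      have hjb' : j < b'.length := hb ▸ hjb
      have ht : u.take i = a ++ b.take j := by rw [hij]; exact List.take_length_add_append j
      have ht' : u'.take i = a' ++ b'.take j := by
        rw [hij, ha]; exact List.take_length_add_append j
      have hd : u.drop (i+1) = b.drop (j+1) := by
        rw [hij, Nat.add_assoc]; exact List.drop_length_add_append (j+1)
      have hd' : u'.drop (i+1) = b'.drop (j+1) := by
        rw [hij, ha, Nat.add_assoc]; exact List.drop_length_add_append (j+1)
      have hsum : a.length + (b.take j).length ≤ N := by
        simp only [List.length_take]; omega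
      obtain ⟨hA, hT⟩ := ih a (b.take j) a' (b'.take j) hsum ha
        (by simp only [List.length_take]; omega) (by rw [← ht, ← ht']; exact hs.1)
      refine ⟨hA, ?_⟩
      -- reconstruct b and b'
      have hgm : u[i]'hilt = m := by
        simp only [hi_def]
        exact List.getElem_idxOf (List.idxOf_lt_length_iff.mpr hmem)
      have hmb : m ∈ b := by
        have h3 : u[i]'hilt = b[i - a.length]'(by
            rw [hu_def, List.length_append] at hilt; omega) :=
          List.getElem_append_right hcase
        rw [← hgm, h3]
        exact List.getElem_mem _
      have hgm' : u'[i]'hi'lt = m' := by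
        simp only [hii', hi'_def]
        exact List.getElem_idxOf (List.idxOf_lt_length_iff.mpr hmem')
      have hmb' : m' ∈ b' := by
        have h3 : u'[i]'hi'lt = b'[i - a'.length]'(by
            rw [hu'_def, List.length_append] at hi'lt; omega) :=
          List.getElem_append_right (ha ▸ hcase)
        rw [← hgm', h3]
        exact List.getElem_mem _
      have hna : m ∉ a := by
        intro hcon
        have : u.idxOf m < a.length :=
          (List.idxOf_append_of_mem hcon) ▸ List.idxOf_lt_length_iff.mpr hcon
        omega
      have hna' : m' ∉ a' := by
        intro hcon
        have h1 : u'.idxOf m' < a'.length :=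
          (List.idxOf_append_of_mem hcon) ▸ List.idxOf_lt_length_iff.mpr hcon
        rw [← hi'_def, ← hii'] at h1
        omega
      have hubb : ∀ x ∈ b, x ≤ m := fun x hx => hub x (List.mem_append_right _ hx)
      have hubb' : ∀ x ∈ b', x ≤ m' := fun x hx => hub' x (List.mem_append_right _ hx)
      have hib : b.idxOf m = j := by
        have := List.idxOf_append_of_notMem hna (l₂ := b)
        rw [← hu_def, ← hi_def] at this
        omega
      have hib' : b'.idxOf m' = j := by
        have := List.idxOf_append_of_notMem hna' (l₂ := b')
        rw [← hu'_def, ← hi'_def, ← hii'] at this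
        rw [← ha] at this
        omega
      rw [decTree_eq_node hmb hubb, decTree_eq_node hmb' hubb', hib, hib',
        shape_eq_node_iff]
      exact ⟨hT, by rw [← hd, ← hd']; exact hs.2⟩

lemma decTree_append_cons (a b : List ℕ+) (k : ℕ+) (h : ∀ x ∈ a ++ b, x < k) :
    decTree (a ++ k :: b) = .node (decTree a) k (decTree b) := by
  have hm : k ∈ a ++ k :: b := by simp
  have hub : ∀ x ∈ a ++ k :: b, x ≤ k := by
    intro x hx
    rcases List.mem_append.mp hx with hx | hx
    · exact (h x (List.mem_append_left _ hx)).le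
    · rcases List.mem_cons.mp hx with hx | hx
      · exact hx.le
      · exact (h x (List.mem_append_right _ hx)).le
  have hna : k ∉ a := fun h' => lt_irrefl k (h k (List.mem_append_left _ h'))
  have hidx : (a ++ k :: b).idxOf k = a.length := by
    rw [List.idxOf_append_of_notMem hna]
    simp
  rw [decTree_eq_node hm hub, hidx]
  congr 1
  · rw [List.take_append_of_le_length le_rfl, List.take_length]
  · have : a ++ k :: b = (a ++ [k]) ++ b := by simp
    rw [this, show a.length + 1 = (a ++ [k]).length by simp, List.drop_left]

end DecTreeProof

/-- Inserting a new maximum letter `k` in corresponding positions of two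
standard words whose decreasing trees have the same shape yields decreasing
trees of the same shape. -/
theorem decTree_shape_insert_max (α α' β β' : List ℕ+) (k : ℕ+)
    (hα : α.length = α'.length) (hβ : β.length = β'.length)
    (hk : ∀ x ∈ α ++ α' ++ β ++ β', x < k)
    (hstd : IsStandard (α ++ [k] ++ β)) (hstd' : IsStandard (α' ++ [k] ++ β'))
    (hshape : shape (decTree (α ++ β)) = shape (decTree (α' ++ β'))) :
    shape (decTree (α ++ [k] ++ β)) = shape (decTree (α' ++ [k] ++ β')) := by
  have hk1 : ∀ x ∈ α ++ β, x < k := by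
    intro x hx
    rcases List.mem_append.mp hx with hx | hx
    · exact hk x (by simp [hx])
    · exact hk x (by simp [hx])
  have hk2 : ∀ x ∈ α' ++ β', x < k := by
    intro x hx
    rcases List.mem_append.mp hx with hx | hx
    · exact hk x (by simp [hx])
    · exact hk x (by simp [hx])
  have e1 : α ++ [k] ++ β = α ++ k :: β := by simp
  have e2 : α' ++ [k] ++ β' = α' ++ k :: β' := by simp
  rw [e1, e2, DecTreeProof.decTree_append_cons α β k hk1,
    DecTreeProof.decTree_append_cons α' β' k hk2, DecTreeProof.shape_eq_node_iff]
  exact DecTreeProof.key (α.length + β.length) α β α' β' le_rfl hα hβ hshape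
end

section
/- Let α, α', β, β' be words over the positive integers with |α| = |α'| and |β| = |β'|, and let k be a letter strictly greater than every letter of α, α', β, β', such that αkβ and α'kβ' are standard words. If the increasing trees of αβ and α'β' have the same shape, then the increasing trees of αkβ and α'kβ' have the same shape. -/
open BT

namespace InsMaxAux

/-- Size (number of nodes) of a binary tree. -/
def sz {α : Type} : BT α → ℕ
  | .leaf => 0
  | .node l _ r => sz l + sz r + 1

lemma sz_map {α β : Type} (f : α → β) : ∀ t : BT α, sz (t.map f) = sz t
  | .leaf => rfl
  | .node l a r => by simp only [BT.map, sz, sz_map f l, sz_map f r]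

lemma sz_shape {α : Type} (t : BT α) : sz (shape t) = sz t := sz_map _ t

lemma shape_node {α : Type} (l : BT α) (a : α) (r : BT α) :
    shape (BT.node l a r) = .node (shape l) () (shape r) := rfl

/-- Insertion of a new node at infix position `p` in a shape. -/
def insSh : BT Unit → ℕ → BT Unit
  | .leaf, _ => .node .leaf () .leaf
  | .node l _ r, p =>
      if p ≤ sz l then .node (insSh l p) () r else .node l () (insSh r (p - sz l - 1))

lemma fm_le_init (a : ℕ+) : ∀ l : List ℕ+, l.foldr min a ≤ a
  | [] => le_rfl
  | _ :: l => le_trans (min_le_right _ _) (fm_le_init a l)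

lemma fm_le (a : ℕ+) : ∀ l : List ℕ+, ∀ x ∈ l, l.foldr min a ≤ x
  | b :: l, x, hx => by
    rcases List.mem_cons.1 hx with rfl | hx
    · exact min_le_left _ _
    · exact le_trans (min_le_right _ _) (fm_le a l x hx)

lemma fm_mem (a : ℕ+) : ∀ l : List ℕ+, l.foldr min a = a ∨ l.foldr min a ∈ l
  | [] => Or.inl rfl
  | b :: l => by
    simp only [List.foldr]
    rcases min_choice b (l.foldr min a) with h | h
    · rw [h]; exact Or.inr (List.mem_cons_self)
    · rw [h]; rcases fm_mem a l with h' | h'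
      · exact Or.inl h'
      · exact Or.inr (List.mem_cons_of_mem _ h')

lemma lmin_mem (a : ℕ+) (l : List ℕ+) : (a :: l).foldr min a ∈ a :: l := by
  rcases fm_mem a (a :: l) with h | h
  · rw [h]; exact List.mem_cons_self
  · exact h

lemma lmin_le (a : ℕ+) (l : List ℕ+) : ∀ x ∈ a :: l, (a :: l).foldr min a ≤ x :=
  fm_le a (a :: l)

lemma incAux_nil (n : ℕ) : incAux n [] = .leaf := by cases n <;> rfl

lemma incAux_cons (n : ℕ) (a : ℕ+) (l : List ℕ+) :
    incAux (n + 1) (a :: l) =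
      .node (incAux n ((a :: l).take ((a :: l).idxOf ((a :: l).foldr min a))))
        ((a :: l).foldr min a)
        (incAux n ((a :: l).drop ((a :: l).idxOf ((a :: l).foldr min a) + 1))) := rfl

lemma incAux_congr : ∀ (N : ℕ) (u : List ℕ+), u.length ≤ N → ∀ n m : ℕ,
    u.length ≤ n → u.length ≤ m → incAux n u = incAux m u := by
  intro N
  induction N with
  | zero =>
    intro u hu n m _ _
    obtain rfl : u = [] := List.eq_nil_of_length_eq_zero (Nat.le_zero.1 hu)
    rw [incAux_nil, incAux_nil]
  | succ N ih =>
    intro u hu n m hn hm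
    cases u with
    | nil => rw [incAux_nil, incAux_nil]
    | cons a l =>
      simp only [List.length_cons] at hu hn hm
      obtain ⟨n', rfl⟩ : ∃ n', n = n' + 1 := ⟨n - 1, by omega⟩
      obtain ⟨m', rfl⟩ : ∃ m', m = m' + 1 := ⟨m - 1, by omega⟩
      have hi : (a :: l).idxOf ((a :: l).foldr min a) < (a :: l).length :=
        List.idxOf_lt_length_iff.2 (lmin_mem a l)
      set i := (a :: l).idxOf ((a :: l).foldr min a) with hidef
      have htl : ((a :: l).take i).length = i := List.length_take_of_le (le_of_lt hi)
      have hdl : ((a :: l).drop (i + 1)).length = l.length - i := by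
        rw [List.length_drop]; simp only [List.length_cons]; omega
      simp only [List.length_cons] at hi
      rw [incAux_cons, incAux_cons, ← hidef,
        ih _ (by omega : ((a :: l).take i).length ≤ N) n' m' (by omega) (by omega),
        ih _ (by omega : ((a :: l).drop (i + 1)).length ≤ N) n' m' (by omega) (by omega)]

lemma incAux_eq_incTree {u : List ℕ+} {n : ℕ} (h : u.length ≤ n) :
    incAux n u = incTree u :=
  incAux_congr u.length u le_rfl n u.length h le_rfl

lemma incTree_cons (a : ℕ+) (l : List ℕ+) :
    incTree (a :: l) =
      .node (incTree ((a :: l).take ((a :: l).idxOf ((a :: l).foldr min a))))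
        ((a :: l).foldr min a)
        (incTree ((a :: l).drop ((a :: l).idxOf ((a :: l).foldr min a) + 1))) := by
  have hi : (a :: l).idxOf ((a :: l).foldr min a) < (a :: l).length :=
    List.idxOf_lt_length_iff.2 (lmin_mem a l)
  set i := (a :: l).idxOf ((a :: l).foldr min a) with hidef
  simp only [List.length_cons] at hi
  rw [incTree, List.length_cons, incAux_cons, ← hidef,
    incAux_eq_incTree (by rw [List.length_take]; simp only [List.length_cons]; omega),
    incAux_eq_incTree (by rw [List.length_drop]; simp only [List.length_cons]; omega)]

lemma sz_incTree : ∀ (N : ℕ) (u : List ℕ+), u.length ≤ N → sz (incTree u) = u.length := by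
  intro N
  induction N with
  | zero =>
    intro u hu
    obtain rfl : u = [] := List.eq_nil_of_length_eq_zero (Nat.le_zero.1 hu)
    rfl
  | succ N ih =>
    intro u hu
    cases u with
    | nil => rfl
    | cons a l =>
      have hi : (a :: l).idxOf ((a :: l).foldr min a) < (a :: l).length :=
        List.idxOf_lt_length_iff.2 (lmin_mem a l)
      set i := (a :: l).idxOf ((a :: l).foldr min a) with hidef
      have htl : ((a :: l).take i).length = i := List.length_take_of_le (le_of_lt hi)
      have hdl : ((a :: l).drop (i + 1)).length = (a :: l).length - (i + 1) :=
        List.length_drop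
      simp only [List.length_cons] at hi hu hdl
      rw [incTree_cons, ← hidef, sz, ih _ (by omega), ih _ (by omega), htl, hdl,
        List.length_cons]
      omega

end InsMaxAux

open InsMaxAux in
lemma key : ∀ (N : ℕ) (u : List ℕ+), u.length ≤ N → ∀ (k : ℕ+) (p : ℕ),
    (∀ x ∈ u, x < k) → p ≤ u.length →
    shape (incTree (u.take p ++ [k] ++ u.drop p)) = insSh (shape (incTree u)) p := by
  intro N
  induction N with
  | zero =>
    intro u hu k p hk hp
    obtain rfl : u = [] := List.eq_nil_of_length_eq_zero (Nat.le_zero.1 hu)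
    obtain rfl : p = 0 := Nat.le_zero.1 hp
    simp [incTree, incAux, shape, BT.map, insSh]
  | succ N ih =>
    intro u hu k p hk hp
    cases u with
    | nil =>
      obtain rfl : p = 0 := Nat.le_zero.1 hp
      simp [incTree, incAux, shape, BT.map, insSh]
    | cons a l =>
      set m := (a :: l).foldr min a with hmdef
      set i := (a :: l).idxOf m with hidef
      set w := (a :: l).take p ++ [k] ++ (a :: l).drop p with hwdef
      have hm_mem : m ∈ a :: l := lmin_mem a l
      have hm_le : ∀ x ∈ a :: l, m ≤ x := lmin_le a l
      have hmk : m < k := hk m hm_mem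
      have hi : i < (a :: l).length := List.idxOf_lt_length_iff.2 hm_mem
      have hlp : ((a :: l).take p).length = p := List.length_take_of_le hp
      have hwlen : w.length = (a :: l).length + 1 := by
        simp only [hwdef, List.length_append, List.length_take, List.length_drop,
          List.length_singleton]
        simp only [List.length_cons] at hp ⊢
        omega
      obtain ⟨b, t, hbt⟩ : ∃ b t, w = b :: t := by
        cases hw : w with
        | nil => rw [hw] at hwlen; simp at hwlen
        | cons b t => exact ⟨b, t, rfl⟩
      have hm_mem_w : m ∈ w := by
        rw [hwdef]
        rcases List.mem_append.1
            (show m ∈ (a :: l).take p ++ (a :: l).drop p by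
              rw [List.take_append_drop]; exact hm_mem) with h | h
        · exact List.mem_append.2 (Or.inl (List.mem_append.2 (Or.inl h)))
        · exact List.mem_append.2 (Or.inr h)
      have hm_le_w : ∀ x ∈ w, m ≤ x := by
        intro x hx
        rw [hwdef] at hx
        rcases List.mem_append.1 hx with h | h
        · rcases List.mem_append.1 h with h' | h'
          · exact hm_le x (List.mem_of_mem_take h')
          · rw [List.mem_singleton.1 h']; exact le_of_lt hmk
        · exact hm_le x (List.mem_of_mem_drop h)
      have hmin_w : (b :: t).foldr min b = m := by
        have h1 : (b :: t).foldr min b ∈ w := by rw [hbt]; exact lmin_mem b t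
        have h2 : ∀ x ∈ w, (b :: t).foldr min b ≤ x := by rw [hbt]; exact lmin_le b t
        exact le_antisymm (h2 m hm_mem_w) (hm_le_w _ h1)
      rw [incTree_cons a l, ← hmdef, ← hidef, shape_node]
      have hszL : sz (shape (incTree ((a :: l).take i))) = i := by
        rw [sz_shape, sz_incTree ((a :: l).take i).length _ le_rfl, List.length_take]
        omega
      by_cases hpi : p ≤ i
      · -- k goes into the left subtree
        have hnmem : m ∉ (a :: l).take p := by
          intro hmem
          have h1 := List.idxOf_append_of_mem hmem (l₂ := (a :: l).drop p)
          rw [List.take_append_drop, ← hidef] at h1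
          have h2 := List.idxOf_lt_length_iff.2 hmem
          omega
        have hiw : w.idxOf m = i + 1 := by
          have h0 : m ∉ (a :: l).take p ++ [k] := by
            simp only [List.mem_append, List.mem_singleton]
            rintro (h | rfl)
            · exact hnmem h
            · exact lt_irrefl _ hmk
          have h1 : w.idxOf m = ((a :: l).take p ++ [k]).length
              + ((a :: l).drop p).idxOf m := by
            rw [hwdef, List.idxOf_append_of_notMem h0]
          have h2 : (a :: l).idxOf m = ((a :: l).take p).length
              + ((a :: l).drop p).idxOf m := by
            conv_lhs => rw [← List.take_append_drop p (a :: l)]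
            rw [List.idxOf_append_of_notMem hnmem]
          rw [h1]
          simp only [List.length_append, List.length_singleton]
          rw [← hidef] at h2
          omega
        rw [hbt, incTree_cons b t, hmin_w, ← hbt, hiw, shape_node]
        have htake : w.take (i + 1) =
            ((a :: l).take i).take p ++ [k] ++ ((a :: l).take i).drop p := by
          rw [hwdef, List.take_append, List.take_append]
          have h1 : List.take (i + 1) ((a :: l).take p) = (a :: l).take p := by
            rw [List.take_take]; congr 1; omega
          have h2 : List.take (i + 1 - p) [k] = [k] :=
            List.take_of_length_le (by simp only [List.length_singleton]; omega)
          rw [h1, hlp, h2]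
          congr 2
          · rw [List.take_take]; congr 1; omega
          · rw [List.drop_take]
            congr 1
            simp only [List.length_append, List.length_singleton, hlp]
            omega
        have hdrop : w.drop (i + 1 + 1) = (a :: l).drop (i + 1) := by
          rw [hwdef, List.drop_append, List.drop_append]
          rw [List.drop_eq_nil_of_le (by rw [hlp]; omega),
            List.drop_eq_nil_of_le (by simp only [List.length_singleton]; omega)]
          simp only [List.nil_append, List.length_append, List.length_singleton, hlp]
          rw [List.drop_drop]
          congr 1
          omega
        rw [htake, hdrop]
        simp only [insSh, hszL]
        rw [if_pos hpi]
        have hlen_take : ((a :: l).take i).length = i := List.length_take_of_le (le_of_lt hi)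
        congr 1
        refine ih ((a :: l).take i) ?_ k p (fun x hx => hk x (List.mem_of_mem_take hx)) ?_
        · simp only [List.length_cons] at hi hu ⊢; omega
        · omega
      · -- k goes into the right subtree
        push_neg at hpi
        have hmem : m ∈ (a :: l).take p := by
          by_contra hmem
          have h1 := List.idxOf_append_of_notMem hmem (l₂ := (a :: l).drop p)
          rw [List.take_append_drop, ← hidef] at h1
          omega
        have hiw : w.idxOf m = i := by
          have h1 : w.idxOf m = ((a :: l).take p).idxOf m := by
            rw [hwdef, List.append_assoc, List.idxOf_append_of_mem hmem]
          have h2 : (a :: l).idxOf m = ((a :: l).take p).idxOf m := by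
            conv_lhs => rw [← List.take_append_drop p (a :: l)]
            rw [List.idxOf_append_of_mem hmem]
          rw [← hidef] at h2
          omega
        rw [hbt, incTree_cons b t, hmin_w, ← hbt, hiw, shape_node]
        set q := p - (i + 1) with hqdef
        have hdlen : (List.drop (i + 1) ((a :: l).take p)).length = q := by
          rw [List.length_drop, hlp]
        have hvsplit : (a :: l).drop (i + 1) =
            List.drop (i + 1) ((a :: l).take p) ++ (a :: l).drop p := by
          conv_lhs => rw [← List.take_append_drop p (a :: l)]
          rw [List.drop_append, hlp]
          have h0 : i + 1 - p = 0 := by omega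
          rw [h0, List.drop_zero]
        have hA : ((a :: l).drop (i + 1)).take q = List.drop (i + 1) ((a :: l).take p) := by
          rw [hvsplit, List.take_append, hdlen,
            List.take_of_length_le (le_of_eq hdlen), Nat.sub_self, List.take_zero,
            List.append_nil]
        have hB : ((a :: l).drop (i + 1)).drop q = (a :: l).drop p := by
          rw [hvsplit, List.drop_append, hdlen,
            List.drop_eq_nil_of_le (le_of_eq hdlen), Nat.sub_self, List.drop_zero,
            List.nil_append]
        have hdrop : w.drop (i + 1) =
            ((a :: l).drop (i + 1)).take q ++ [k] ++ ((a :: l).drop (i + 1)).drop q := by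
          rw [hwdef, List.drop_append, List.drop_append]
          simp only [List.length_append, List.length_singleton, hlp]
          have h5 : i + 1 - p = 0 := by omega
          have h6 : i + 1 - (p + 1) = 0 := by omega
          rw [h5, h6, List.drop_zero, List.drop_zero, hA, hB]
        have htake : w.take i = (a :: l).take i := by
          rw [hwdef, List.take_append, List.take_append,
            List.take_take]
          have h3 : min i p = i := by omega
          have h4 : i - p = 0 := by omega
          rw [h3, hlp, h4]
          simp
          omega
        rw [htake, hdrop]
        simp only [insSh, hszL]
        rw [if_neg (by omega)]
        congr 1
        have hdl : ((a :: l).drop (i + 1)).length = (a :: l).length - (i + 1) :=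
          List.length_drop
        have h7 : p - i - 1 = q := by omega
        rw [h7]
        refine ih ((a :: l).drop (i + 1)) ?_ k q (fun x hx => hk x (List.mem_of_mem_drop hx)) ?_
        · simp only [List.length_cons] at hu hi ⊢; rw [hdl]; simp only [List.length_cons]; omega
        · simp only [List.length_cons] at hp hi ⊢; rw [hdl]; simp only [List.length_cons]; omega

/-- Inserting a new maximum letter `k` in corresponding positions of two
standard words whose increasing trees have the same shape yields increasing
trees of the same shape. -/
theorem incTree_shape_insert_max (α α' β β' : List ℕ+) (k : ℕ+)
    (hα : α.length = α'.length) (hβ : β.length = β'.length)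
    (hk : ∀ x ∈ α ++ α' ++ β ++ β', x < k)
    (hstd : IsStandard (α ++ [k] ++ β)) (hstd' : IsStandard (α' ++ [k] ++ β'))
    (hshape : shape (incTree (α ++ β)) = shape (incTree (α' ++ β'))) :
    shape (incTree (α ++ [k] ++ β)) = shape (incTree (α' ++ [k] ++ β')) := by
  have hk1 : ∀ x ∈ α ++ β, x < k := by
    intro x hx
    refine hk x ?_
    simp only [List.mem_append] at hx ⊢
    tauto
  have hk2 : ∀ x ∈ α' ++ β', x < k := by
    intro x hx
    refine hk x ?_
    simp only [List.mem_append] at hx ⊢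
    tauto
  have h1 := key (α ++ β).length (α ++ β) le_rfl k α.length hk1
    (by simp only [List.length_append]; omega)
  have h2 := key (α' ++ β').length (α' ++ β') le_rfl k α'.length hk2
    (by simp only [List.length_append]; omega)
  rw [List.take_left, List.drop_left] at h1
  rw [List.take_left, List.drop_left] at h2
  rw [h1, h2, hshape, hα]
end

section
/- For any word u over the positive integers, u is congruent under the sylvester congruence to the left-to-right postfix reading of its right strict binary search tree P_sylv(u); equivalently, P_sylv applied to the postfix reading of P_sylv(u) returns P_sylv(u). -/
open BT

lemma content_rIns (a : ℕ+) (t : BT ℕ+) : content (rIns a t) = a ::ₘ content t := by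
  induction t with
  | leaf => simp [rIns, content]
  | node l x r ihl ihr =>
      simp only [rIns]
      split
      · simp only [content, ihl]
        rw [Multiset.cons_add, Multiset.cons_swap]
      · simp only [content, ihr]
        rw [Multiset.add_cons, Multiset.cons_swap]

lemma isRBST_rIns (a : ℕ+) (t : BT ℕ+) (h : IsRBST t) : IsRBST (rIns a t) := by
  induction t with
  | leaf => exact ⟨by simp [content], by simp [content], trivial, trivial⟩
  | node l x r ihl ihr =>
      obtain ⟨h1, h2, h3, h4⟩ := h
      simp only [rIns]
      by_cases hax : a ≤ x
      · rw [if_pos hax]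
        refine ⟨?_, h2, ihl h3, h4⟩
        intro y hy
        rw [content_rIns] at hy
        rcases Multiset.mem_cons.1 hy with h | h
        · subst h; assumption
        · exact h1 y h
      · rw [if_neg hax]
        refine ⟨h1, ?_, h3, ihr h4⟩
        intro y hy
        rw [content_rIns] at hy
        rcases Multiset.mem_cons.1 hy with h | h
        · subst h; exact lt_of_not_ge hax
        · exact h2 y h

lemma mem_content_of_mem_postfixRead {x : ℕ+} {t : BT ℕ+}
    (h : x ∈ postfixRead t) : x ∈ content t := by
  induction t with
  | leaf => simp [postfixRead] at h
  | node l a r ihl ihr =>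
      simp only [postfixRead, List.mem_append, List.mem_singleton] at h
      simp only [content, Multiset.mem_cons, Multiset.mem_add]
      tauto

lemma foldr_rIns_gt (a : ℕ+) (l r : BT ℕ+) (w : List ℕ+) (hw : ∀ x ∈ w, a < x) :
    w.foldr rIns (node l a r) = node l a (w.foldr rIns r) := by
  induction w with
  | nil => rfl
  | cons b w ih =>
      have hb : a < b := hw b (by simp)
      simp only [List.foldr_cons, ih (fun x hx => hw x (List.mem_cons_of_mem _ hx)), rIns]
      rw [if_neg (by exact fun h => absurd hb (not_lt.2 h))]

lemma foldr_rIns_le (a : ℕ+) (l r : BT ℕ+) (w : List ℕ+) (hw : ∀ x ∈ w, x ≤ a) :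
    w.foldr rIns (node l a r) = node (w.foldr rIns l) a r := by
  induction w with
  | nil => rfl
  | cons b w ih =>
      have hb : b ≤ a := hw b (by simp)
      simp only [List.foldr_cons, ih (fun x hx => hw x (List.mem_cons_of_mem _ hx)), rIns]
      rw [if_pos hb]

lemma Psylv_postfixRead_of_isRBST (t : BT ℕ+) (h : IsRBST t) :
    Psylv (postfixRead t) = t := by
  induction t with
  | leaf => rfl
  | node l a r ihl ihr =>
      obtain ⟨h1, h2, h3, h4⟩ := h
      simp only [postfixRead, Psylv, List.foldr_append]
      have step1 : [a].foldr rIns BT.leaf = node BT.leaf a BT.leaf := rfl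
      rw [step1, foldr_rIns_gt a _ _ _
        (fun x hx => h2 x (mem_content_of_mem_postfixRead hx)),
        foldr_rIns_le a _ _ _
        (fun x hx => h1 x (mem_content_of_mem_postfixRead hx))]
      rw [show (postfixRead l).foldr rIns BT.leaf = Psylv (postfixRead l) from rfl,
        show (postfixRead r).foldr rIns BT.leaf = Psylv (postfixRead r) from rfl,
        ihl h3, ihr h4]

lemma isRBST_Psylv (u : List ℕ+) : IsRBST (Psylv u) := by
  induction u with
  | nil => trivial
  | cons a u ih => exact isRBST_rIns a _ ih

/-- Every word is sylvester-congruent to the postfix reading of its right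
strict binary search tree: `Psylv` of the postfix reading of `Psylv u`
returns `Psylv u`. -/
theorem Psylv_postfixRead (u : List ℕ+) :
    Psylv (postfixRead (Psylv u)) = Psylv u := by
  exact Psylv_postfixRead_of_isRBST _ (isRBST_Psylv u)
end

section
/- If u and v are words over the positive integers with u ≡_sylv v (they insert to the same right strict binary search tree), then for any word w, uw ≡_sylv vw and wu ≡_sylv wv; that is, the relation 'same right strict binary search tree under insertion' is a congruence on the free monoid. -/
open BT

namespace BT

def trimLe (x : ℕ+) : BT ℕ+ → BT ℕ+
  | leaf => leaf
  | node l a r => if a ≤ x then node l a (trimLe x r) else trimLe x l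

def trimGt (x : ℕ+) : BT ℕ+ → BT ℕ+
  | leaf => leaf
  | node l a r => if a ≤ x then trimGt x r else node (trimGt x l) a r

lemma trimLe_rIns (x a : ℕ+) (t : BT ℕ+) :
    trimLe x (rIns a t) = if a ≤ x then rIns a (trimLe x t) else trimLe x t := by
  induction t with
  | leaf =>
    by_cases h : a ≤ x <;> simp [rIns, trimLe, h]
  | node l b r ihl ihr =>
    by_cases hab : a ≤ b
    · by_cases hbx : b ≤ x
      · have hax : a ≤ x := hab.trans hbx
        simp [rIns, trimLe, hab, hbx, hax]
      · simp [rIns, trimLe, hab, hbx, ihl]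
    · by_cases hbx : b ≤ x
      · by_cases hax : a ≤ x <;> simp [rIns, trimLe, hab, hbx, hax, ihr]
      · have hax : ¬ a ≤ x := fun h => hbx ((le_of_not_ge hab).trans h)
        simp [rIns, trimLe, hab, hbx, hax]

lemma trimGt_rIns (x a : ℕ+) (t : BT ℕ+) :
    trimGt x (rIns a t) = if a ≤ x then trimGt x t else rIns a (trimGt x t) := by
  induction t with
  | leaf =>
    by_cases h : a ≤ x <;> simp [rIns, trimGt, h]
  | node l b r ihl ihr =>
    by_cases hab : a ≤ b
    · by_cases hbx : b ≤ x
      · have hax : a ≤ x := hab.trans hbx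
        simp [rIns, trimGt, hab, hbx, hax, ihr]
      · by_cases hax : a ≤ x <;> simp [rIns, trimGt, hab, hbx, hax, ihl]
    · by_cases hbx : b ≤ x
      · simp [rIns, trimGt, hab, hbx, ihr]
      · have hax : ¬ a ≤ x := fun h => hbx ((le_of_not_ge hab).trans h)
        simp [rIns, trimGt, hab, hbx, hax]

end BT

open BT

lemma trimLe_Psylv (x : ℕ+) (u : List ℕ+) :
    Psylv (u.filter (fun a => a ≤ x)) = trimLe x (Psylv u) := by
  induction u with
  | nil => simp [Psylv, trimLe]
  | cons a u ih =>
    by_cases h : a ≤ x <;>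
      simp [Psylv, List.filter_cons, h, trimLe_rIns, ← ih] at * <;>
      simp [Psylv, h, ih, trimLe_rIns]

lemma trimGt_Psylv (x : ℕ+) (u : List ℕ+) :
    Psylv (u.filter (fun a => ¬ a ≤ x)) = trimGt x (Psylv u) := by
  induction u with
  | nil => simp [Psylv, trimGt]
  | cons a u ih =>
    simp only [Psylv, List.foldr_cons] at *
    rw [trimGt_rIns, ← ih, List.filter_cons]
    by_cases h : a ≤ x <;> simp [h, not_le]

lemma foldr_node (u : List ℕ+) (l r : BT ℕ+) (x : ℕ+) :
    u.foldr rIns (.node l x r) =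
      .node ((u.filter (fun a => a ≤ x)).foldr rIns l) x
        ((u.filter (fun a => ¬ a ≤ x)).foldr rIns r) := by
  induction u with
  | nil => simp
  | cons a u ih =>
    rw [List.foldr_cons, ih, List.filter_cons, List.filter_cons]
    by_cases h : a ≤ x <;> simp only [h, decide_true, decide_false, not_true,
      not_false_iff, decide_not, Bool.not_true, Bool.not_false, if_true,
      if_false, List.foldr_cons, rIns, ite_true, ite_false] <;> simp

lemma key_s17 (u v : List ℕ+) (h : Psylv u = Psylv v) (t : BT ℕ+) :
    u.foldr rIns t = v.foldr rIns t := by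
  induction t generalizing u v with
  | leaf => exact h
  | node l x r ihl ihr =>
    rw [foldr_node, foldr_node]
    have h1 : Psylv (u.filter (fun a => a ≤ x)) = Psylv (v.filter (fun a => a ≤ x)) := by
      rw [trimLe_Psylv, trimLe_Psylv, h]
    have h2 : Psylv (u.filter (fun a => ¬ a ≤ x)) = Psylv (v.filter (fun a => ¬ a ≤ x)) := by
      rw [trimGt_Psylv, trimGt_Psylv, h]
    rw [ihl _ _ h1, ihr _ _ h2]

/-- The relation "same right strict binary search tree under insertion" is a
congruence on the free monoid. -/
theorem Psylv_congruence (u v : List ℕ+) (h : Psylv u = Psylv v) (w : List ℕ+) :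
    Psylv (u ++ w) = Psylv (v ++ w) ∧ Psylv (w ++ u) = Psylv (w ++ v) := by
  constructor
  · simpa [Psylv, List.foldr_append] using key_s17 u v h (Psylv w)
  · simp [Psylv, List.foldr_append]
    show w.foldr rIns (Psylv u) = w.foldr rIns (Psylv v)
    rw [h]
end

section
/- In every connected component of the quasi-crystal graph Γ(hypo) there is exactly one standard word; consequently, two words u and v lie in the same connected component if and only if std(u) = std(v). -/
open BT

/-- Two words are in the same connected component of the quasi-crystal graph
`Γ(hypo)`: one is obtained from the other by a sequence of quasi-Kashiwara
operators (`EqvGen` of the edge relation `v = ḟ i u`). -/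
def SameComp (u v : List ℕ+) : Prop :=
  Relation.EqvGen (fun u v => ∃ i : ℕ+, qfDef i u ∧ v = qf i u) u v

namespace HypoAux

open List

/-! ### Rank function and basic facts about `stdWord` -/

/-- The rank of letter `a` at position `j` in `u`, as a natural number. -/
def rk (u : List ℕ+) (j : ℕ) (a : ℕ+) : ℕ :=
  u.countP (fun b => decide (b < a)) + (u.take (j+1)).countP (fun b => decide (b = a))

lemma length_stdWord (u : List ℕ+) : (stdWord u).length = u.length :=
  List.length_mapIdx

lemma getElem_stdWord (u : List ℕ+) (j : ℕ) (h : j < (stdWord u).length) :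
    (stdWord u)[j] = (rk u j (u[j]'(by simpa [length_stdWord] using h))).toPNat' := by
  simp [stdWord, rk, List.getElem_mapIdx]

lemma countP_take_pos (u : List ℕ+) (j : ℕ) (h : j < u.length) :
    0 < (u.take (j+1)).countP (fun b => decide (b = u[j])) := by
  rw [List.countP_pos_iff]
  refine ⟨u[j], ?_, by simp⟩
  rw [List.mem_iff_getElem]
  exact ⟨j, by simp [List.length_take]; omega, by simp [List.getElem_take]⟩

lemma rk_pos (u : List ℕ+) (j : ℕ) (h : j < u.length) : 0 < rk u j u[j] := by
  have := countP_take_pos u j h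
  unfold rk; omega


lemma coe_getElem_stdWord (u : List ℕ+) (j : ℕ) (h : j < (stdWord u).length) :
    ((stdWord u)[j] : ℕ) = rk u j (u[j]'(by simpa [length_stdWord] using h)) := by
  rw [getElem_stdWord, Nat.toPNat'_coe, if_pos (rk_pos u j (by simpa [length_stdWord] using h))]

lemma countP_lt_add_countP_eq (l : List ℕ+) (a : ℕ+) :
    l.countP (fun b => decide (b < a)) + l.countP (fun b => decide (b = a)) =
      l.countP (fun b => decide (b < a + 1)) := by
  induction l with
  | nil => simp
  | cons c t ih =>
    simp only [List.countP_cons]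
    have h1 : (c < a + 1) ↔ (c < a ∨ c = a) := by
      rw [PNat.lt_add_one_iff, le_iff_lt_or_eq]
    rcases lt_trichotomy c a with h'|h'|h'
    · have e1 : decide (c < a) = true := by simpa using h'
      have e2 : decide (c = a) = false := by simp [ne_of_lt h']
      have e3 : decide (c < a + 1) = true := by simp [h1.mpr (Or.inl h')]
      simp only [e1, e2, e3, if_true, Bool.false_eq_true, if_false]; omega
    · have e1 : decide (c < a) = false := by simp [h']
      have e2 : decide (c = a) = true := by simp [h']
      have e3 : decide (c < a + 1) = true := by simp [h1.mpr (Or.inr h')]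
      simp only [e1, e2, e3, if_true, Bool.false_eq_true, if_false]; omega
    · have e1 : decide (c < a) = false := by simp [not_lt.mpr (le_of_lt h')]
      have e2 : decide (c = a) = false := by simp [(ne_of_lt h').symm]
      have e3 : decide (c < a + 1) = false := by
        simp only [decide_eq_false_iff_not]
        intro h; exact (h1.mp h).elim (not_lt.mpr (le_of_lt h')) (ne_of_gt h')
      simp only [e1, e2, e3, if_true, Bool.false_eq_true, if_false]; omega

lemma countP_range_lt (c n : ℕ) :
    (List.range n).countP (fun m => decide (m < c)) = min c n := by
  induction n with
  | zero => simp
  | succ n ih =>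
    rw [List.range_succ, List.countP_append, ih]
    by_cases h : n < c
    · simp [h]; omega
    · simp [h]; omega

lemma countP_range_eq (c n : ℕ) :
    (List.range n).countP (fun m => decide (m = c)) = if c < n then 1 else 0 := by
  induction n with
  | zero => simp
  | succ n ih =>
    rw [List.range_succ, List.countP_append, ih]
    by_cases h : n = c
    · simp [h]; try omega
    · simp [h]; split_ifs <;> omega

lemma rk_le (u : List ℕ+) (j : ℕ) (h : j < u.length) : rk u j u[j] ≤ u.length := by
  have h1 : (u.take (j+1)).countP (fun b => decide (b = u[j])) ≤
      u.countP (fun b => decide (b = u[j])) :=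
    (List.take_sublist _ _).countP_le
  have h2 := countP_lt_add_countP_eq u u[j]
  have h3 := List.countP_le_length (p := fun b => decide (b < u[j] + 1)) (l := u)
  unfold rk; omega

/-- Monotonicity of ranks. -/
lemma rk_lt_rk (u : List ℕ+) {j k : ℕ} (hj : j < u.length) (hk : k < u.length)
    (h : u[j] < u[k] ∨ (u[j] = u[k] ∧ j < k)) :
    rk u j u[j] < rk u k u[k] := by
  have hposk := countP_take_pos u k hk
  rcases h with h | ⟨heq, hlt⟩
  · have h1 : (u.take (j+1)).countP (fun b => decide (b = u[j])) ≤
        u.countP (fun b => decide (b = u[j])) := (List.take_sublist _ _).countP_le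
    have h2 := countP_lt_add_countP_eq u u[j]
    have h3 : u.countP (fun b => decide (b < u[j] + 1)) ≤
        u.countP (fun b => decide (b < u[k])) := by
      apply List.countP_mono_left
      intro x _ hx
      simp only [decide_eq_true_eq] at *
      exact lt_of_lt_of_le hx (PNat.add_one_le_iff.mpr h)
    unfold rk; omega
  · rw [heq]
    have hsplit : (u.take (k+1)).countP (fun b => decide (b = u[k])) =
        (u.take (j+1)).countP (fun b => decide (b = u[k])) +
          ((u.take (k+1)).drop (j+1)).countP (fun b => decide (b = u[k])) := by
      have ht : (u.take (k+1)).take (j+1) = u.take (j+1) := by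
        rw [List.take_take]; congr 1; omega
      conv_lhs => rw [← List.take_append_drop (j+1) (u.take (k+1))]
      rw [List.countP_append, ht]
    have hpos2 : 0 < ((u.take (k+1)).drop (j+1)).countP (fun b => decide (b = u[k])) := by
      rw [List.countP_pos_iff]
      refine ⟨u[k], ?_, by simp⟩
      rw [List.mem_iff_getElem]
      refine ⟨k - (j+1), by simp [List.length_take]; omega, ?_⟩
      rw [List.getElem_drop, List.getElem_take]
      congr 1; omega
    unfold rk; omega

lemma rk_injective (u : List ℕ+) {j k : ℕ} (hj : j < u.length) (hk : k < u.length)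
    (h : rk u j u[j] = rk u k u[k]) : j = k := by
  rcases lt_trichotomy j k with hlt | he | hlt
  · rcases lt_trichotomy (u[j]) (u[k]) with h1 | h1 | h1
    · exact absurd h (Nat.ne_of_lt (rk_lt_rk u hj hk (Or.inl h1)))
    · exact absurd h (Nat.ne_of_lt (rk_lt_rk u hj hk (Or.inr ⟨h1, hlt⟩)))
    · exact absurd h.symm (Nat.ne_of_lt (rk_lt_rk u hk hj (Or.inl h1)))
  · exact he
  · rcases lt_trichotomy (u[j]) (u[k]) with h1 | h1 | h1
    · exact absurd h (Nat.ne_of_lt (rk_lt_rk u hj hk (Or.inl h1)))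
    · exact absurd h.symm (Nat.ne_of_lt (rk_lt_rk u hk hj (Or.inr ⟨h1.symm, hlt⟩)))
    · exact absurd h.symm (Nat.ne_of_lt (rk_lt_rk u hk hj (Or.inl h1)))

lemma toPNat'_inj {m n : ℕ} (hm : 0 < m) (hn : 0 < n) (h : m.toPNat' = n.toPNat') :
    m = n := by
  have := congrArg (PNat.val) h
  simpa [Nat.toPNat'_coe, hm, hn] using this

lemma isStandard_stdWord (u : List ℕ+) : IsStandard (stdWord u) := by
  unfold IsStandard
  rw [length_stdWord]
  set n := u.length with hn
  have hlen : (stdWord u).length = n := length_stdWord u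
  have hnd1 : (stdWord u).Nodup := by
    rw [List.nodup_iff_injective_get]
    intro i k h
    simp only [List.get_eq_getElem] at h
    have h' := congrArg (PNat.val) h
    rw [coe_getElem_stdWord u i i.isLt, coe_getElem_stdWord u k k.isLt] at h'
    exact Fin.ext (rk_injective u (by simpa [hlen] using i.isLt)
      (by simpa [hlen] using k.isLt) h')
  have hnd2 : ((List.range n).map (fun j => (j + 1).toPNat')).Nodup := by
    refine List.Nodup.map ?_ (List.nodup_range (n := n))
    intro a b h
    have := toPNat'_inj (Nat.succ_pos a) (Nat.succ_pos b) h
    omega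
  have hsub : stdWord u ⊆ (List.range n).map (fun j => (j + 1).toPNat') := by
    intro x hx
    rw [List.mem_iff_getElem] at hx
    obtain ⟨j, hj, rfl⟩ := hx
    have hj' : j < u.length := by simpa [hlen] using hj
    have h1 := rk_pos u j hj'
    have h2 := rk_le u j hj'
    rw [List.mem_map]
    refine ⟨rk u j u[j] - 1, by rw [List.mem_range]; omega, ?_⟩
    rw [getElem_stdWord]
    congr 1
    omega
  have hperm := (List.subperm_of_subset hnd1 hsub).perm_of_length_le
    (by simp [hlen])
  exact hperm

lemma stdWord_of_isStandard {w : List ℕ+} (h : IsStandard w) : stdWord w = w := by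
  unfold IsStandard at h
  set n := w.length with hn
  apply List.ext_getElem (length_stdWord w)
  intro j h1 h2
  have hj : j < n := h2
  set a := w[j] with ha
  -- a ≤ n
  have hmem : a ∈ (List.range n).map (fun j => (j + 1).toPNat') :=
    h.subset (List.getElem_mem h2)
  have haln : (a : ℕ) ≤ n := by
    rw [List.mem_map] at hmem
    obtain ⟨m, hm, hma⟩ := hmem
    rw [List.mem_range] at hm
    have := congrArg (PNat.val) hma
    rw [PNat.toPNat'_coe (Nat.succ_pos m)] at this
    omega
  have hc1 : w.countP (fun b => decide (b < a)) = (a : ℕ) - 1 := by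
    rw [h.countP_eq, List.countP_map]
    have : ((fun b => decide (b < a)) ∘ (fun j => (j + 1).toPNat'))
        = fun m => decide (m < (a : ℕ) - 1) := by
      funext m
      simp only [Function.comp]
      rw [decide_eq_decide]
      rw [← PNat.coe_lt_coe, PNat.toPNat'_coe (Nat.succ_pos m)]
      have := a.pos
      omega
    rw [this, countP_range_lt]
    omega
  have hc2 : (w.take (j+1)).countP (fun b => decide (b = a)) = 1 := by
    have htot : w.countP (fun b => decide (b = a)) = 1 := by
      rw [h.countP_eq, List.countP_map]
      have : ((fun b => decide (b = a)) ∘ (fun j => (j + 1).toPNat'))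
          = fun m => decide (m = (a : ℕ) - 1) := by
        funext m
        simp only [Function.comp]
        rw [decide_eq_decide]
        constructor
        · intro he
          have := congrArg (PNat.val) he
          rw [PNat.toPNat'_coe (Nat.succ_pos m)] at this
          omega
        · intro he
          have hm1 : m + 1 = (a : ℕ) := by have := a.pos; omega
          apply PNat.coe_injective
          rw [PNat.toPNat'_coe (Nat.succ_pos m)]
          exact hm1
      rw [this, countP_range_eq]
      have hap := a.pos
      rw [if_pos (by omega : (a:ℕ) - 1 < n)]
    have hle : (w.take (j+1)).countP (fun b => decide (b = a)) ≤ 1 := by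
      rw [← htot]
      exact (List.take_sublist _ _).countP_le
    have hge : 0 < (w.take (j+1)).countP (fun b => decide (b = a)) :=
      countP_take_pos w j hj
    omega
  rw [getElem_stdWord]
  apply PNat.coe_injective
  rw [PNat.toPNat'_coe (rk_pos w j hj)]
  show w.countP (fun b => decide (b < a)) +
    (w.take (j+1)).countP (fun b => decide (b = a)) = (a : ℕ)
  rw [hc1, hc2]
  have := a.pos
  omega

/-! ### Structure of `qf` -/

lemma indexOf_eq {α : Type*} [DecidableEq α] (l : List α) (a : α) (k : ℕ)
    (hk : k < l.length) (h1 : l[k] = a) (h2 : ∀ m (hm : m < l.length), m < k → l[m] ≠ a) :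
    List.idxOf a l = k := by
  show List.findIdx (fun b => b == a) l = k
  rw [List.findIdx_eq hk]
  refine ⟨by simp [h1], fun j hj => by simp [h2 j (hj.trans hk) hj]⟩

lemma qf_eq_set (i : ℕ+) (u : List ℕ+) (p : ℕ) (hp : p < u.length)
    (hpi : u[p] = i) (hr : ∀ j (hj : j < u.length), p < j → u[j] ≠ i) :
    qf i u = u.set p (i+1) := by
  have hn1 : p ≤ u.length - 1 := by omega
  have hq : List.idxOf i u.reverse = u.length - 1 - p := by
    refine indexOf_eq _ _ _ (by simp only [List.length_reverse]; omega) ?_ ?_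
    · rw [List.getElem_reverse]
      try simp only [List.length_reverse]
      simp only [Nat.sub_sub_self hn1]
      exact hpi
    · intro m hm hml
      rw [List.getElem_reverse]
      apply hr
      simp only [List.length_reverse] at hm hml ⊢
      omega
  unfold qf
  rw [hq]
  apply List.ext_getElem
  · simp
  · intro k h1 h2
    have hk : k < u.length := by simpa using h2
    rw [List.getElem_reverse, List.getElem_set, List.getElem_set]
    simp only [List.length_set, List.length_reverse]
    by_cases hpk : p = k
    · rw [if_pos (by omega), if_pos hpk]
    · rw [if_neg (by omega), if_neg hpk, List.getElem_reverse]
      try simp only [List.length_reverse]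
      congr 1
      omega

lemma exists_rightmost {i : ℕ+} {u : List ℕ+} (h : i ∈ u) :
    ∃ p, ∃ hp : p < u.length, u[p] = i ∧ ∀ j (hj : j < u.length), p < j → u[j] ≠ i := by
  have hmem : i ∈ u.reverse := by simpa using h
  have hq : List.idxOf i u.reverse < u.reverse.length := List.idxOf_lt_length_iff.mpr hmem
  set q := List.idxOf i u.reverse with hqdef
  have hqn : q < u.length := by simpa using hq
  refine ⟨u.length - 1 - q, by omega, ?_, ?_⟩
  · have hthis := List.getElem_idxOf hq
    rw [List.getElem_reverse] at hthis
    try simp only [List.length_reverse] at hthis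
    exact hthis
  · intro j hj hlt hji
    have hk : u.length - 1 - j < q := by omega
    have hfalse := List.not_of_lt_findIdx (p := fun b => b == i) (xs := u.reverse)
      (i := u.length - 1 - j) (by exact hk)
    rw [List.getElem_reverse] at hfalse
    try simp only [List.length_reverse] at hfalse
    simp only [Nat.sub_sub_self (by omega : j ≤ u.length - 1)] at hfalse
    simp only [beq_eq_false_iff_ne, ne_eq] at hfalse
    exact hfalse hji

lemma pair_sublist {a b : ℕ+} {l : List ℕ+} {j1 j2 : ℕ} (h1 : j1 < l.length)
    (h2 : j2 < l.length) (hlt : j1 < j2) (ha : l[j1] = a) (hb : l[j2] = b) :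
    List.Sublist [a, b] l := by
  have hb : [b].Sublist (l.drop (j1+1)) := by
    rw [List.singleton_sublist, List.mem_iff_getElem]
    exact ⟨j2 - (j1+1), by simp; omega, by rw [List.getElem_drop]; rw [← hb]; congr 1; omega⟩
  have h2' : List.Sublist [a, b] (l[j1] :: l.drop (j1+1)) := by
    rw [ha]
    exact hb.cons₂ _
  have := h2'.trans ((List.getElem_cons_drop (as := l) (i := j1) h1) ▸ (List.drop_sublist j1 l))
  exact this

/-! ### Invariance of `stdWord` under the operators -/

lemma countP_set' (p : ℕ+ → Bool) (l : List ℕ+) (m : ℕ) (a : ℕ+) (h : m < l.length) :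
    (l.set m a).countP p + (if p l[m] then 1 else 0) = l.countP p + (if p a then 1 else 0) := by
  rw [List.countP_set (p := p) (l := l) (i := m) (a := a) h]
  have hle : (if p l[m] then 1 else 0) ≤ l.countP p := by
    by_cases hp : p l[m]
    · simp only [hp, if_true]
      rw [Nat.succ_le_iff, List.countP_pos_iff]
      exact ⟨l[m], List.getElem_mem h, hp⟩
    · simp [hp]
  omega

lemma countP_set'' (p : ℕ+ → Bool) (l : List ℕ+) (m : ℕ) (a : ℕ+) (h : m < l.length)
    (c d : ℕ) (hc : (if p l[m] then 1 else 0) = c) (hd : (if p a then 1 else 0) = d) :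
    (l.set m a).countP p + c = l.countP p + d := by
  rw [← hc, ← hd]; exact countP_set' p l m a h

lemma pnat_ne_succ (i : ℕ+) : i ≠ i + 1 := by
  intro hc; have := congrArg PNat.val hc; simp [PNat.add_coe] at this

lemma rk_set (u : List ℕ+) (i : ℕ+) (p : ℕ) (hp : p < u.length)
    (hpi : u[p] = i) (hr : ∀ j (hj : j < u.length), p < j → u[j] ≠ i)
    (hplus : ∀ j (hj : j < u.length), u[j] = i + 1 → p < j)
    (j : ℕ) (hj : j < u.length) :
    rk (u.set p (i+1)) j ((u.set p (i+1))[j]'(by simpa using hj)) = rk u j u[j] := by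
  have hne : i ≠ i + 1 := pnat_ne_succ i
  -- count of letters equal to i in a long enough prefix is everything
  have ftake_i : ∀ m, p < m → (u.take m).countP (fun b => decide (b = i)) =
      u.countP (fun b => decide (b = i)) := by
    intro m hm
    conv_rhs => rw [← List.take_append_drop m u]
    rw [List.countP_append]
    have hz : (u.drop m).countP (fun b => decide (b = i)) = 0 := by
      rw [List.countP_eq_zero]
      intro b hb
      rw [List.mem_iff_getElem] at hb
      obtain ⟨k, hk, rfl⟩ := hb
      rw [List.getElem_drop]
      simp only [decide_eq_true_eq]
      exact hr _ (by simp at hk; omega) (by omega)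
    omega
  -- no letter i+1 in prefixes up to p
  have ftake_i1 : ∀ m, m ≤ p + 1 → (u.take m).countP (fun b => decide (b = i + 1)) = 0 := by
    intro m hm
    rw [List.countP_eq_zero]
    intro b hb
    rw [List.mem_iff_getElem] at hb
    obtain ⟨k, hk, rfl⟩ := hb
    have hk' : k < m := by simp [List.length_take] at hk; omega
    have hku : k < u.length := by simp [List.length_take] at hk; omega
    rw [List.getElem_take]
    simp only [decide_eq_true_eq]
    intro hc
    have := hplus k hku hc
    omega
  have hcnt_lt1 : 0 < u.countP (fun b => decide (b < i + 1)) := by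
    rw [List.countP_pos_iff]
    exact ⟨i, by rw [List.mem_iff_getElem]; exact ⟨p, hp, hpi⟩,
      by simpa using PNat.lt_add_right i 1⟩
  by_cases hjp : j = p
  · subst hjp
    have hvj : (u.set j (i+1))[j]'(by simpa using hj) = i + 1 :=
      List.getElem_set_self (by simpa using hj)
    rw [hvj, hpi]
    unfold rk
    have g1 := countP_set'' (fun b => decide (b < i + 1)) u j (i+1) hj 1 0
      (by rw [hpi]; simp [PNat.lt_add_one_iff]) (by simp)
    have g2 : ((u.set j (i+1)).take (j+1)).countP (fun b => decide (b = i + 1)) = 1 := by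
      rw [List.take_set]
      have hlt : j < (u.take (j+1)).length := by simp [List.length_take]; omega
      have g := countP_set'' (fun b => decide (b = i + 1)) (u.take (j+1)) j (i+1) hlt 0 1
        (by rw [List.getElem_take, hpi]; simp [hne]) (by simp)
      have := ftake_i1 (j+1) (by omega)
      omega
    have g3 := ftake_i (j+1) (by omega)
    have g4 := countP_lt_add_countP_eq u i
    omega
  · have hvj : (u.set p (i+1))[j]'(by simpa using hj) = u[j] := by
      rw [List.getElem_set, if_neg (fun hc => hjp hc.symm)]
    rw [hvj]
    unfold rk
    set a := u[j] with ha
    by_cases hja : a = i + 1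
    · -- the letter at j is i+1, so j is to the right of p
      have hpj : p < j := hplus j hj (by rw [← ha, hja])
      have g1 := countP_set'' (fun b => decide (b < a)) u p (i+1) hp 1 0
        (by rw [hpi, hja]; simp [PNat.lt_add_one_iff]) (by rw [hja]; simp)
      have g2 : ((u.set p (i+1)).take (j+1)).countP (fun b => decide (b = a)) =
          (u.take (j+1)).countP (fun b => decide (b = a)) + 1 := by
        rw [List.take_set]
        have hlt : p < (u.take (j+1)).length := by simp [List.length_take]; omega
        have g := countP_set'' (fun b => decide (b = a)) (u.take (j+1)) p (i+1) hlt 0 1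
          (by rw [List.getElem_take, hpi, hja]; simp [hne]) (by rw [hja]; simp)
        omega
      have hlt1 : 0 < u.countP (fun b => decide (b < a)) := by
        rw [hja]; exact hcnt_lt1
      omega
    · -- the letter at j is neither i nor i+1, or is i with j < p
      have hiff : (i < a) ↔ (i + 1 < a) := by
        constructor
        · intro hlt
          rcases lt_trichotomy (i+1) a with h'|h'|h'
          · exact h'
          · exact absurd h'.symm hja
          · have c1 : (i:ℕ) < (a:ℕ) := by exact_mod_cast hlt
            have c2 : (a:ℕ) < (i:ℕ) + 1 := by
              have := (show ((a:ℕ+):ℕ) < ((i+1 : ℕ+):ℕ) by exact_mod_cast h')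
              simpa [PNat.add_coe] using this
            omega
        · intro hlt
          have c1 : (i:ℕ) + 1 < (a:ℕ) := by
            have := (show ((i+1:ℕ+):ℕ) < ((a:ℕ+):ℕ) by exact_mod_cast hlt)
            simpa [PNat.add_coe] using this
          have : (i:ℕ) < (a:ℕ) := by omega
          exact_mod_cast this
      have g1 : (u.set p (i+1)).countP (fun b => decide (b < a)) =
          u.countP (fun b => decide (b < a)) := by
        by_cases hia : i < a
        · have g := countP_set'' (fun b => decide (b < a)) u p (i+1) hp 1 1
            (by rw [hpi]; simp [hia]) (by simp [hiff.mp hia])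
          omega
        · have hia2 : ¬ (i + 1 < a) := fun h => hia (hiff.mpr h)
          have g := countP_set'' (fun b => decide (b < a)) u p (i+1) hp 0 0
            (by rw [hpi]; simp [hia]) (by simp [hia2])
          omega
      rw [g1]
      have g2 : ((u.set p (i+1)).take (j+1)).countP (fun b => decide (b = a)) =
          (u.take (j+1)).countP (fun b => decide (b = a)) := by
        by_cases hpj : p < j
        · rw [List.take_set]
          have hlt : p < (u.take (j+1)).length := by simp [List.length_take]; omega
          have hai : a ≠ i := by
            intro hc
            exact hr j hj hpj (by rw [← ha, hc])
          have hai2 : ¬ (i = a) := fun h => hai h.symm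
          have hja2 : ¬ (i + 1 = a) := fun h => hja h.symm
          have g := countP_set'' (fun b => decide (b = a)) (u.take (j+1)) p (i+1) hlt 0 0
            (by rw [List.getElem_take, hpi]; simp [hai2])
            (by simp [hja2])
          omega
        · rw [List.take_set, List.set_eq_of_length_le]
          simp [List.length_take]
          omega
      rw [g2]

lemma stdWord_qf {i : ℕ+} {u : List ℕ+} (h : qfDef i u) : stdWord (qf i u) = stdWord u := by
  obtain ⟨hnsub, hmem⟩ := h
  obtain ⟨p, hp, hpi, hr⟩ := exists_rightmost hmem
  have hplus : ∀ j (hj : j < u.length), u[j] = i + 1 → p < j := by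
    intro j hj hje
    by_contra hle
    push_neg at hle
    have hne : j ≠ p := by
      intro hc
      subst hc
      rw [hje] at hpi
      exact pnat_ne_succ i hpi.symm
    exact hnsub (pair_sublist hj hp (by omega) hje hpi)
  rw [qf_eq_set i u p hp hpi hr]
  apply List.ext_getElem (by simp [length_stdWord])
  intro j h1 h2
  have hj : j < u.length := by
    have := length_stdWord u
    omega
  apply PNat.coe_injective
  rw [coe_getElem_stdWord, coe_getElem_stdWord]
  exact rk_set u i p hp hpi hr hplus j hj

/-! ### Connectivity -/

lemma sameComp_refl (u : List ℕ+) : SameComp u u := Relation.EqvGen.refl u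

lemma sameComp_symm {u v : List ℕ+} (h : SameComp u v) : SameComp v u :=
  Relation.EqvGen.symm u v h

lemma sameComp_trans {u v w : List ℕ+} (h1 : SameComp u v) (h2 : SameComp v w) :
    SameComp u w := Relation.EqvGen.trans u v w h1 h2

lemma sameComp_set {w : List ℕ+} {p : ℕ} (hp : p < w.length) (x : ℕ+)
    (hx : w[p] = x) (hnox1 : ∀ j (hj : j < w.length), w[j] ≠ x + 1)
    (hr : ∀ j (hj : j < w.length), p < j → w[j] ≠ x) :
    SameComp w (w.set p (x+1)) := by
  have hqd : qfDef x w := by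
    constructor
    · intro hsub
      have hmem : x + 1 ∈ w := hsub.subset (by simp)
      rw [List.mem_iff_getElem] at hmem
      obtain ⟨j, hj, hje⟩ := hmem
      exact hnox1 j hj hje
    · rw [List.mem_iff_getElem]; exact ⟨p, hp, hx⟩
  exact Relation.EqvGen.rel _ _ ⟨x, hqd, (qf_eq_set x w p hp hx hr).symm⟩

lemma sameComp_chain (d : ℕ) : ∀ (w : List ℕ+) (p : ℕ) (hp : p < w.length) (x y : ℕ+),
    w[p] = x → (x : ℕ) + d = y →
    (∀ j (hj : j < w.length), j ≠ p → w[j] < x ∨ (w[j] = x ∧ j < p) ∨ y < w[j]) →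
    SameComp w (w.set p y) := by
  induction d with
  | zero =>
    intro w p hp x y hx hxy hcond
    have hyx : y = x := by
      apply PNat.coe_injective; omega
    subst hyx
    have hset : w.set p y = w := by
      apply List.ext_getElem (by simp)
      intro k h1 h2
      rw [List.getElem_set]
      split
      · next hpk => subst hpk; exact hx.symm
      · rfl
    rw [hset]
    exact sameComp_refl w
  | succ d ih =>
    intro w p hp x y hx hxy hcond
    have hxy' : (x : ℕ) < (y : ℕ) := by omega
    have hstep : SameComp w (w.set p (x+1)) := by
      apply sameComp_set hp x hx
      · intro j hj hje
        have hcj := congrArg (PNat.val) hje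
        simp only [PNat.add_coe, PNat.one_coe] at hcj
        by_cases hjp : j = p
        · subst hjp
          have := congrArg (PNat.val) hx
          omega
        · rcases hcond j hj hjp with hlt | ⟨he, _⟩ | hgt
          · have : ((w[j]'hj):ℕ) < (x:ℕ) := by exact_mod_cast hlt
            omega
          · have := congrArg (PNat.val) he; omega
          · have : (y:ℕ) < ((w[j]'hj):ℕ) := by exact_mod_cast hgt
            omega
      · intro j hj hjlt hje
        have hcj := congrArg (PNat.val) hje
        rcases hcond j hj (by omega : j ≠ p) with hlt | ⟨he, hlt2⟩ | hgt
        · have : ((w[j]'hj):ℕ) < (x:ℕ) := by exact_mod_cast hlt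
          omega
        · omega
        · have : (y:ℕ) < ((w[j]'hj):ℕ) := by exact_mod_cast hgt
          omega
    have hcond' : ∀ j (hj : j < (w.set p (x+1)).length), j ≠ p →
        (w.set p (x+1))[j] < x + 1 ∨ ((w.set p (x+1))[j] = x + 1 ∧ j < p) ∨
          y < (w.set p (x+1))[j] := by
      intro j hj hjp
      have hj' : j < w.length := by simpa using hj
      rw [List.getElem_set, if_neg (fun hc => hjp hc.symm)]
      rcases hcond j hj' hjp with hlt | ⟨he, _⟩ | hgt
      · exact Or.inl (hlt.trans (PNat.lt_add_right x 1))
      · exact Or.inl (by rw [he]; rw [← PNat.coe_lt_coe]; simp [PNat.add_coe])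
      · exact Or.inr (Or.inr hgt)
    have hnext := ih (w.set p (x+1)) p (by simpa using hp) (x+1) y
      (List.getElem_set_self (by simpa using hp))
      (by simp only [PNat.add_coe, PNat.one_coe]; omega) hcond'
    rw [List.set_set] at hnext
    exact sameComp_trans hstep hnext

lemma le_foldr_max (l : List ℕ+) (j : ℕ) (hj : j < l.length) :
    l[j] ≤ l.foldr max 1 := by
  induction l generalizing j with
  | nil => simp at hj
  | cons c t ih =>
    cases j with
    | zero => exact le_sup_left
    | succ j =>
      have := ih j (by simpa using hj)
      exact this.trans le_sup_right

lemma sameComp_lift (u : List ℕ+) (C : ℕ+)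
    (hC : ∀ j (hj : j < u.length), u[j] ≤ C) :
    SameComp u ((stdWord u).map (fun r => r + C)) := by
  have hlen : (stdWord u).length = u.length := length_stdWord u
  set n := u.length with hn
  set t := stdWord u with ht
  have hlen2 : (stdWord u).length = n := hlen
  -- facts about t
  have tval : ∀ j (hj : j < n), ((t[j]'(by omega) : ℕ+) : ℕ) = rk u j (u[j]'hj) := by
    intro j hj
    exact coe_getElem_stdWord u j (by omega)
  have tle : ∀ j (hj : j < n), ((t[j]'(by omega) : ℕ+) : ℕ) ≤ n := by
    intro j hj
    rw [tval j hj]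
    exact rk_le u j hj
  have tpos : ∀ j (hj : j < n), 1 ≤ ((t[j]'(by omega) : ℕ+) : ℕ) := by
    intro j hj
    exact (t[j]'(by omega)).pos
  have tinj : ∀ j k (hj : j < n) (hk : k < n),
      ((t[j]'(by omega) : ℕ+) : ℕ) = ((t[k]'(by omega) : ℕ+) : ℕ) → j = k := by
    intro j k hj hk he
    rw [tval j hj, tval k hk] at he
    exact rk_injective u hj hk he
  have tmono : ∀ j k (hj : j < n) (hk : k < n),
      ((t[j]'(by omega) : ℕ+) : ℕ) < ((t[k]'(by omega) : ℕ+) : ℕ) →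
      (u[j]'hj) < (u[k]'hk) ∨ ((u[j]'hj) = (u[k]'hk) ∧ j < k) := by
    intro j k hj hk hlt
    rw [tval j hj, tval k hk] at hlt
    rcases lt_trichotomy (u[j]'hj) (u[k]'hk) with h1 | h1 | h1
    · exact Or.inl h1
    · rcases lt_trichotomy j k with h2 | h2 | h2
      · exact Or.inr ⟨h1, h2⟩
      · subst h2
        exact absurd hlt (lt_irrefl _)
      · have := rk_lt_rk u hk hj (Or.inr ⟨h1.symm, h2⟩)
        omega
    · have := rk_lt_rk u hk hj (Or.inl h1)
      omega
  have tsurj : ∀ r : ℕ, 1 ≤ r → r ≤ n → ∃ q, ∃ hq : q < n,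
      ((t[q]'(by omega) : ℕ+) : ℕ) = r := by
    intro r hr1 hrn
    have hstd := isStandard_stdWord u
    unfold IsStandard at hstd
    rw [← ht] at hstd
    have hmem : r.toPNat' ∈ t := by
      rw [hstd.mem_iff]
      rw [List.mem_map]
      exact ⟨r - 1, by rw [List.mem_range]; omega, by congr 1; omega⟩
    rw [List.mem_iff_getElem] at hmem
    obtain ⟨q, hq, hqe⟩ := hmem
    refine ⟨q, by omega, ?_⟩
    rw [hqe, PNat.toPNat'_coe (by omega)]
  -- the staged words
  set w : ℕ → List ℕ+ :=
    fun k => List.zipWith (fun (a : ℕ+) (r : ℕ+) => if n - k < (r : ℕ) then r + C else a) u t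
    with hw
  have hwlen : ∀ k, (w k).length = n := by
    intro k
    simp [hw, hlen]; omega
  have hwget : ∀ k j (hj : j < n), (w k)[j]'(by rw [hwlen k]; exact hj) =
      if n - k < ((t[j]'(by omega) : ℕ+) : ℕ) then (t[j]'(by omega)) + C else u[j]'hj := by
    intro k j hj
    simp [hw, List.getElem_zipWith]
  have base : w 0 = u := by
    apply List.ext_getElem (by rw [hwlen])
    intro j h1 h2
    rw [hwget 0 j (by omega)]
    rw [if_neg (by have := tle j (by omega); omega)]
  have final : w n = t.map (fun r => r + C) := by
    apply List.ext_getElem (by rw [hwlen]; simp [hlen])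
    intro j h1 h2
    have hj : j < n := by rw [← hwlen n]; exact h1
    rw [hwget n j hj]
    rw [if_pos (by have := tpos j hj; omega)]
    simp
  have step : ∀ k, k < n → SameComp (w k) (w (k+1)) := by
    intro k hkn
    obtain ⟨q, hq, hrq⟩ := tsurj (n - k) (by omega) (by omega)
    have hqu : q < u.length := by omega
    have hset : w (k+1) = (w k).set q ((t[q]'(by omega)) + C) := by
      apply List.ext_getElem (by rw [hwlen, List.length_set, hwlen])
      intro j h1 h2
      have hj : j < n := by rw [← hwlen (k+1)]; exact h1
      rw [hwget (k+1) j hj, List.getElem_set]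
      by_cases hjq : q = j
      · subst hjq
        rw [if_pos (by omega), if_pos rfl]
      · rw [if_neg hjq, hwget k j hj]
        have htne : ((t[j]'(by omega) : ℕ+) : ℕ) ≠ n - k := by
          intro hc
          exact hjq (tinj q j hq hj (by omega))
        by_cases hc : n - k < ((t[j]'(by omega) : ℕ+) : ℕ)
        · rw [if_pos (by omega), if_pos hc]
        · rw [if_neg (by omega), if_neg hc]
    rw [hset]
    have hx : (w k)[q]'(by rw [hwlen]; exact hq) = u[q]'hqu := by
      rw [hwget k q hq]
      rw [if_neg (by omega)]
    apply sameComp_chain (((t[q]'(by omega) : ℕ+) : ℕ) + (C : ℕ) - ((u[q]'hqu : ℕ+) : ℕ))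
      (w k) q (by rw [hwlen]; exact hq) (u[q]'hqu) ((t[q]'(by omega)) + C) hx
    · have hCq := hC q hqu
      have hCq' : ((u[q]'hqu : ℕ+) : ℕ) ≤ (C : ℕ) := by exact_mod_cast hCq
      simp only [PNat.add_coe]
      omega
    · intro j hjw hjq
      have hj : j < n := by rw [← hwlen k]; exact hjw
      rw [hwget k j hj]
      by_cases hc : n - k < ((t[j]'(by omega) : ℕ+) : ℕ)
      · rw [if_pos hc]
        right; right
        rw [← PNat.coe_lt_coe]
        simp only [PNat.add_coe]
        omega
      · have htne : ((t[j]'(by omega) : ℕ+) : ℕ) ≠ n - k := by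
          intro hce
          exact hjq (tinj j q hj hq (by omega))
        rw [if_neg hc]
        have hm := tmono j q hj hq (by omega)
        rcases hm with h1 | ⟨h1, h2⟩
        · exact Or.inl h1
        · exact Or.inr (Or.inl ⟨h1, h2⟩)
  have main : ∀ k, k ≤ n → SameComp u (w k) := by
    intro k
    induction k with
    | zero => intro _; rw [base]; exact sameComp_refl u
    | succ k ih =>
      intro hk1
      exact sameComp_trans (ih (by omega)) (step k (by omega))
  rw [← final]
  exact main n le_rfl

lemma sameComp_stdWord (u : List ℕ+) : SameComp u (stdWord u) := by
  set C : ℕ+ := u.foldr max 1 + (stdWord u).foldr max 1 with hCdef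
  have h1 : SameComp u ((stdWord u).map (fun r => r + C)) := by
    apply sameComp_lift u C
    intro j hj
    refine (le_foldr_max u j hj).trans ?_
    rw [hCdef, ← PNat.coe_le_coe]; simp [PNat.add_coe]
  have h2 : SameComp (stdWord u) ((stdWord (stdWord u)).map (fun r => r + C)) := by
    apply sameComp_lift (stdWord u) C
    intro j hj
    refine (le_foldr_max (stdWord u) j hj).trans ?_
    rw [hCdef, ← PNat.coe_le_coe]; simp [PNat.add_coe]
  rw [stdWord_of_isStandard (isStandard_stdWord u)] at h2
  exact sameComp_trans h1 (sameComp_symm h2)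

lemma stdWord_eq_of_sameComp {u v : List ℕ+} (h : SameComp u v) :
    stdWord u = stdWord v := by
  induction h with
  | rel a b hab => obtain ⟨i, hdef, rfl⟩ := hab; exact (stdWord_qf hdef).symm
  | refl a => rfl
  | symm a b _ ih => exact ih.symm
  | trans a b c _ _ ih1 ih2 => exact ih1.trans ih2

end HypoAux

/-- Every connected component of `Γ(hypo)` contains exactly one standard word;
consequently two words lie in the same connected component iff they have the
same standardization. -/
theorem unique_standard_in_component :
    (∀ u : List ℕ+, ∃! s : List ℕ+, IsStandard s ∧ SameComp u s) ∧
    (∀ u v : List ℕ+, SameComp u v ↔ stdWord u = stdWord v) := by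
  have key : ∀ u v : List ℕ+, SameComp u v ↔ stdWord u = stdWord v := by
    intro u v
    constructor
    · exact HypoAux.stdWord_eq_of_sameComp
    · intro h
      exact HypoAux.sameComp_trans (HypoAux.sameComp_stdWord u)
        (h ▸ HypoAux.sameComp_symm (HypoAux.sameComp_stdWord v))
  refine ⟨fun u => ⟨stdWord u, ⟨HypoAux.isStandard_stdWord u, HypoAux.sameComp_stdWord u⟩, ?_⟩, key⟩
  rintro s ⟨hs, hcomp⟩
  have := HypoAux.stdWord_eq_of_sameComp hcomp
  rw [HypoAux.stdWord_of_isStandard hs] at this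
  exact this.symm
end
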